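/- For the second-order Mellin spline B₂(x) = (1 − |log x|)₊, the first algebraic moment vanishes: m₁(B₂, x) := ∑_{k∈ℤ} B₂(e^{-k}x)(k − log x) = 0 for every x > 0, and hence for any f ∈ C(ℝ⁺) of class C^{(1)} locally at x, (S_w^{B₂} f)(x) − f(x) = o(w^{-1}) as w → +∞. -/

import Mathlib

open Real Filter Asymptotics

/-- The second-order Mellin spline `B₂(x) = (1 - |log x|)₊`. -/
noncomputable def B2 (x : ℝ) : ℝ := max (1 - |Real.log x|) 0

/-- The generalized exponential sampling operator. -/
noncomputable def expSampling (φ f : ℝ → ℝ) (w x : ℝ) : ℝ :=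
  ∑' k : ℤ, f (Real.exp (k / w)) * φ (Real.exp (-k) * x ^ w)

lemma B2_apply (y : ℝ) (hy : 0 < y) (k : ℤ) :
    B2 (Real.exp (-(k:ℝ)) * y) = max (1 - |Real.log y - k|) 0 := by
  unfold B2
  rw [Real.log_mul (Real.exp_ne_zero _) (ne_of_gt hy), Real.log_exp,
    show -(k:ℝ) + Real.log y = Real.log y - k by ring]

lemma tsum_B2_support (t : ℝ) (g : ℤ → ℝ) :
    ∑' k : ℤ, g k * max (1 - |t - (k:ℝ)|) 0
      = g ⌊t⌋ * (1 - (t - ⌊t⌋)) + g (⌊t⌋ + 1) * (t - ⌊t⌋) := by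
  have hu0 : (0:ℝ) ≤ t - ⌊t⌋ := sub_nonneg.2 (Int.floor_le t)
  have hu1 : t - ⌊t⌋ < 1 := by linarith [Int.lt_floor_add_one t]
  rw [tsum_eq_sum (s := {⌊t⌋, ⌊t⌋ + 1}) ?_]
  · rw [Finset.sum_pair (by omega)]
    have h1 : |t - (⌊t⌋:ℝ)| = t - ⌊t⌋ := abs_of_nonneg hu0
    have h2 : |t - ((⌊t⌋ + 1 : ℤ):ℝ)| = 1 - (t - ⌊t⌋) := by
      push_cast
      rw [abs_of_nonpos (by linarith)]
      ring
    rw [h1, h2]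
    have h3 : max (1 - (t - (⌊t⌋:ℝ))) 0 = 1 - (t - ⌊t⌋) := max_eq_left (by linarith)
    have h4 : max (1 - (1 - (t - (⌊t⌋:ℝ)))) 0 = t - ⌊t⌋ := by
      rw [max_eq_left (by linarith)]; ring
    rw [h3, h4]
  · intro k hk
    simp only [Finset.mem_insert, Finset.mem_singleton] at hk
    push_neg at hk
    have hcase : k ≤ ⌊t⌋ - 1 ∨ ⌊t⌋ + 2 ≤ k := by omega
    have habs : (1:ℝ) ≤ |t - k| := by
      rcases hcase with h | h
      · have : (k:ℝ) ≤ (⌊t⌋:ℝ) - 1 := by exact_mod_cast h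
        rw [abs_of_nonneg (by linarith)]; linarith
      · have : (⌊t⌋:ℝ) + 2 ≤ (k:ℝ) := by exact_mod_cast h
        rw [abs_of_nonpos (by linarith)]; linarith
    rw [max_eq_right (by linarith), mul_zero]

/-- The first algebraic moment of `B₂` vanishes, and hence the generalized
exponential sampling series with kernel `B₂` approximates locally `C¹` functions
with order `o(w⁻¹)`. -/
theorem B2_first_moment_vanishes_and_voronovskaja
    (f : ℝ → ℝ)
    (hfbd : ∃ B : ℝ, ∀ x : ℝ, 0 < x → |f x| ≤ B)
    (hfcont : ContinuousOn f (Set.Ioi (0:ℝ)))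
    (x : ℝ) (hx : 0 < x) (hfx : DifferentiableAt ℝ f x) :
    (∀ y : ℝ, 0 < y → ∑' k : ℤ, B2 (Real.exp (-k) * y) * ((k : ℝ) - Real.log y) = 0) ∧
    (fun w : ℝ => expSampling B2 f w x - f x) =o[atTop] fun w : ℝ => w⁻¹ := by
  constructor
  · -- first moment vanishes
    intro y hy
    have h : ∀ k : ℤ, B2 (Real.exp (-(k:ℝ)) * y) * ((k : ℝ) - Real.log y)
        = (fun k : ℤ => (k : ℝ) - Real.log y) k * max (1 - |Real.log y - (k:ℝ)|) 0 := by
      intro k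
      rw [B2_apply y hy k, mul_comm]
  -- rewrite the tsum and compute
    rw [tsum_congr h, tsum_B2_support (Real.log y) (fun k => (k : ℝ) - Real.log y)]
    push_cast
    ring
  · -- Voronovskaja-type estimate
    set f' : ℝ := deriv f x with hf'
    have hder : (fun y => f y - f x - f' * (y - x)) =o[nhds x] fun y => y - x := by
      have h := hfx.hasDerivAt
      rw [hasDerivAt_iff_isLittleO] at h
      simpa [smul_eq_mul, mul_comm] using h
    rw [isLittleO_iff]
    intro c hc
    have hε : 0 < c / (4 * x) := by positivity
    have hev := (isLittleO_iff.1 hder) hε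
    rw [Metric.eventually_nhds_iff] at hev
    obtain ⟨δ, hδ, hδE⟩ := hev
    filter_upwards [eventually_ge_atTop (1:ℝ), eventually_gt_atTop (2 * x / δ),
      eventually_ge_atTop (2 * |f'| * x / c)] with w hw1 hwδ hwf'
    have hw0 : (0:ℝ) < w := by linarith
    set t : ℝ := w * Real.log x with ht
    set n : ℤ := ⌊t⌋ with hn
    set u : ℝ := t - n with hu
    have hu0 : (0:ℝ) ≤ u := sub_nonneg.2 (Int.floor_le t)
    have hu1 : u < 1 := by
      have := Int.lt_floor_add_one t
      rw [hu]; push_cast; linarith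
    set s₁ : ℝ := -u / w with hs₁
    set s₂ : ℝ := (1 - u) / w with hs₂
    set a : ℝ := Real.exp ((n:ℝ) / w) with ha
    set b : ℝ := Real.exp (((n:ℝ) + 1) / w) with hb
    -- rewrite the sampling series as a two-point convex combination
    have hS : expSampling B2 f w x = f a * (1 - u) + f b * u := by
      unfold expSampling
      have hlog : Real.log (x ^ w) = t := Real.log_rpow hx w
      have h : ∀ k : ℤ, f (Real.exp ((k:ℝ) / w)) * B2 (Real.exp (-(k:ℝ)) * x ^ w)
          = (fun k : ℤ => f (Real.exp ((k:ℝ) / w))) k * max (1 - |t - (k:ℝ)|) 0 := by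
        intro k
        rw [B2_apply _ (Real.rpow_pos_of_pos hx w) k, hlog]
      rw [tsum_congr h, tsum_B2_support t (fun k : ℤ => f (Real.exp ((k:ℝ) / w)))]
      simp only [← hn]
      push_cast
      rw [← hu, ← ha, ← hb]
    -- exponent bounds
    have hs₁abs : |s₁| ≤ 1 / w := by
      rw [hs₁, abs_div, abs_neg, abs_of_nonneg hu0, abs_of_pos hw0]
      gcongr <;> linarith
    have hs₂abs : |s₂| ≤ 1 / w := by
      rw [hs₂, abs_div, abs_of_nonneg (by linarith), abs_of_pos hw0]
      gcongr <;> linarith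
    have h1w : 1 / w ≤ 1 := by rw [div_le_one hw0]; exact hw1
    have hs₁le1 : |s₁| ≤ 1 := hs₁abs.trans h1w
    have hs₂le1 : |s₂| ≤ 1 := hs₂abs.trans h1w
    -- a and b in terms of x
    have hxa : a = x * Real.exp s₁ := by
      rw [ha, hs₁, ← Real.exp_log hx, ← Real.exp_add]
      congr 1
      rw [hu, ht]
      push_cast
      field_simp
      ring
    have hxb : b = x * Real.exp s₂ := by
      rw [hb, hs₂, ← Real.exp_log hx, ← Real.exp_add]
      congr 1
      rw [hu, ht]
      push_cast
      field_simp
      ring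
    have hax : |a - x| ≤ 2 * x / w := by
      calc |a - x| = x * |Real.exp s₁ - 1| := by
            rw [hxa, show x * Real.exp s₁ - x = x * (Real.exp s₁ - 1) by ring,
              abs_mul, abs_of_pos hx]
        _ ≤ x * (2 * |s₁|) :=
            mul_le_mul_of_nonneg_left (Real.abs_exp_sub_one_le hs₁le1) hx.le
        _ ≤ x * (2 * (1 / w)) := by gcongr
        _ = 2 * x / w := by ring
    have hbx : |b - x| ≤ 2 * x / w := by
      calc |b - x| = x * |Real.exp s₂ - 1| := by
            rw [hxb, show x * Real.exp s₂ - x = x * (Real.exp s₂ - 1) by ring,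
              abs_mul, abs_of_pos hx]
        _ ≤ x * (2 * |s₂|) :=
            mul_le_mul_of_nonneg_left (Real.abs_exp_sub_one_le hs₂le1) hx.le
        _ ≤ x * (2 * (1 / w)) := by gcongr
        _ = 2 * x / w := by ring
    have hsmall : 2 * x / w < δ := by
      rw [div_lt_iff₀ hw0]
      have := (div_lt_iff₀ hδ).1 hwδ
      nlinarith
    -- the error terms
    set Ea : ℝ := f a - f x - f' * (a - x) with hEa_def
    set Eb : ℝ := f b - f x - f' * (b - x) with hEb_def
    have hEa : |Ea| ≤ c / (4 * x) * |a - x| := by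
      have := hδE (y := a) (by rw [Real.dist_eq]; exact lt_of_le_of_lt hax hsmall)
      simpa [Real.norm_eq_abs, hEa_def] using this
    have hEb : |Eb| ≤ c / (4 * x) * |b - x| := by
      have := hδE (y := b) (by rw [Real.dist_eq]; exact lt_of_le_of_lt hbx hsmall)
      simpa [Real.norm_eq_abs, hEb_def] using this
    have hEa' : |Ea| ≤ c / (4 * x) * (2 * x / w) :=
      hEa.trans (mul_le_mul_of_nonneg_left hax hε.le)
    have hEb' : |Eb| ≤ c / (4 * x) * (2 * x / w) :=
      hEb.trans (mul_le_mul_of_nonneg_left hbx hε.le)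
    -- the linear part
    set L : ℝ := (a - x) * (1 - u) + (b - x) * u with hL_def
    have hzero : (1 - u) * s₁ + u * s₂ = 0 := by
      rw [hs₁, hs₂]
      field_simp
      ring
    have hlin : L = x * ((Real.exp s₁ - 1 - s₁) * (1 - u) + (Real.exp s₂ - 1 - s₂) * u) := by
      rw [hL_def, hxa, hxb]
      linear_combination x * hzero
    have hq1 : |Real.exp s₁ - 1 - s₁| ≤ s₁ ^ 2 := Real.abs_exp_sub_one_sub_id_le hs₁le1
    have hq2 : |Real.exp s₂ - 1 - s₂| ≤ s₂ ^ 2 := Real.abs_exp_sub_one_sub_id_le hs₂le1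
    have hs₁sq : s₁ ^ 2 ≤ 1 / w ^ 2 := by
      calc s₁ ^ 2 = |s₁| ^ 2 := (sq_abs s₁).symm
        _ ≤ (1 / w) ^ 2 := pow_le_pow_left₀ (abs_nonneg _) hs₁abs 2
        _ = 1 / w ^ 2 := by rw [div_pow, one_pow]
    have hs₂sq : s₂ ^ 2 ≤ 1 / w ^ 2 := by
      calc s₂ ^ 2 = |s₂| ^ 2 := (sq_abs s₂).symm
        _ ≤ (1 / w) ^ 2 := pow_le_pow_left₀ (abs_nonneg _) hs₂abs 2
        _ = 1 / w ^ 2 := by rw [div_pow, one_pow]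
    have hLbound : |L| ≤ x / w ^ 2 := by
      rw [hlin, abs_mul, abs_of_pos hx]
      have habs2 : |(Real.exp s₁ - 1 - s₁) * (1 - u) + (Real.exp s₂ - 1 - s₂) * u|
          ≤ s₁ ^ 2 * (1 - u) + s₂ ^ 2 * u := by
        calc |(Real.exp s₁ - 1 - s₁) * (1 - u) + (Real.exp s₂ - 1 - s₂) * u|
            ≤ |(Real.exp s₁ - 1 - s₁) * (1 - u)| + |(Real.exp s₂ - 1 - s₂) * u| :=
              abs_add_le _ _
          _ = |Real.exp s₁ - 1 - s₁| * (1 - u) + |Real.exp s₂ - 1 - s₂| * u := by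
              rw [abs_mul, abs_mul, abs_of_nonneg (by linarith : (0:ℝ) ≤ 1 - u),
                abs_of_nonneg hu0]
          _ ≤ s₁ ^ 2 * (1 - u) + s₂ ^ 2 * u := by gcongr <;> linarith
      calc x * |(Real.exp s₁ - 1 - s₁) * (1 - u) + (Real.exp s₂ - 1 - s₂) * u|
          ≤ x * (s₁ ^ 2 * (1 - u) + s₂ ^ 2 * u) :=
            mul_le_mul_of_nonneg_left habs2 hx.le
        _ ≤ x * (1 / w ^ 2 * (1 - u) + 1 / w ^ 2 * u) := by gcongr <;> linarith
        _ = x / w ^ 2 := by field_simp; ring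
    -- decomposition
    have hdecomp : expSampling B2 f w x - f x = f' * L + Ea * (1 - u) + Eb * u := by
      rw [hS, hL_def, hEa_def, hEb_def]
      ring
    have hfirst : |f'| * (x / w ^ 2) ≤ c / (2 * w) := by
      rw [show |f'| * (x / w ^ 2) = |f'| * x / w ^ 2 by ring,
        div_le_div_iff₀ (by positivity) (by positivity)]
      have h2 : 2 * |f'| * x ≤ c * w := by
        have := (div_le_iff₀ hc).1 hwf'
        linarith
      linarith [mul_le_mul_of_nonneg_right h2 hw0.le]
    have hL' : |f'| * |L| ≤ |f'| * (x / w ^ 2) :=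
      mul_le_mul_of_nonneg_left hLbound (abs_nonneg f')
    have e1 : |Ea| * (1 - u) ≤ (c / (4 * x) * (2 * x / w)) * (1 - u) :=
      mul_le_mul_of_nonneg_right hEa' (by linarith)
    have e2 : |Eb| * u ≤ (c / (4 * x) * (2 * x / w)) * u :=
      mul_le_mul_of_nonneg_right hEb' hu0
    have e3 : (c / (4 * x) * (2 * x / w)) * (1 - u) + (c / (4 * x) * (2 * x / w)) * u
        = c / (2 * w) := by
      field_simp
      ring
    have e4 : c / (2 * w) + c / (2 * w) = c / w := by ring
    calc ‖expSampling B2 f w x - f x‖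
        = |f' * L + Ea * (1 - u) + Eb * u| := by rw [Real.norm_eq_abs, hdecomp]
      _ ≤ |f' * L + Ea * (1 - u)| + |Eb * u| := abs_add_le _ _
      _ ≤ |f' * L| + |Ea * (1 - u)| + |Eb * u| := by
          linarith [abs_add_le (f' * L) (Ea * (1 - u))]
      _ = |f'| * |L| + |Ea| * (1 - u) + |Eb| * u := by
          rw [abs_mul, abs_mul, abs_mul, abs_of_nonneg (by linarith : (0:ℝ) ≤ 1 - u),
            abs_of_nonneg hu0]
      _ ≤ c / w := by linarith [hL', e1, e2, e3, e4, hfirst]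
      _ = c * ‖w⁻¹‖ := by
          rw [Real.norm_eq_abs, abs_of_pos (inv_pos.2 hw0), div_eq_mul_inv]
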